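/- (Discrete-time Lyapunov equation for the opinion dynamics.) Under Assumption 1, there exists a unique symmetric N×N real matrix Q satisfying (ΛP)^⊤ Q (ΛP) − Q = −I, and this Q is positive definite; explicitly, Q = ∑_{k=0}^∞ ((ΛP)^⊤)^k (ΛP)^k, where the series converges. -/

import Mathlib

open Matrix Finset
attribute [local instance] Matrix.linftyOpNormedRing Matrix.linftyOpNormedSpace

variable {N : ℕ}

section rowsum
variable (A : Matrix (Fin N) (Fin N) ℝ)

lemma lyap_pow_nonneg (hA : ∀ i j, 0 ≤ A i j) (n : ℕ) : ∀ i j, 0 ≤ (A ^ n) i j := by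
  induction n with
  | zero => intro i j; simp [Matrix.one_apply]; positivity
  | succ n ih =>
    intro i j
    rw [pow_succ, Matrix.mul_apply]
    exact Finset.sum_nonneg fun u _ => mul_nonneg (ih i u) (hA u j)

lemma lyap_s_succ (n : ℕ) (v : Fin N) :
    ∑ j, (A ^ (n+1)) v j = ∑ u, A v u * ∑ j, (A ^ n) u j := by
  rw [pow_succ']
  simp_rw [Matrix.mul_apply, Finset.mul_sum]
  rw [Finset.sum_comm]

lemma lyap_s_le_one (hA : ∀ i j, 0 ≤ A i j) (hrow : ∀ v, ∑ j, A v j ≤ 1) (n : ℕ) :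
    ∀ v, ∑ j, (A ^ n) v j ≤ 1 := by
  induction n with
  | zero => intro v; simp [Matrix.one_apply]
  | succ n ih =>
    intro v
    rw [lyap_s_succ]
    calc ∑ u, A v u * ∑ j, (A ^ n) u j ≤ ∑ u, A v u * 1 :=
      Finset.sum_le_sum fun u _ => mul_le_mul_of_nonneg_left (ih u) (hA v u)
    _ ≤ 1 := by simpa using hrow v

lemma lyap_s_nonneg (hA : ∀ i j, 0 ≤ A i j) (n : ℕ) (v : Fin N) :
    0 ≤ ∑ j, (A ^ n) v j :=
  Finset.sum_nonneg fun j _ => lyap_pow_nonneg A hA n v j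

lemma lyap_s_succ_le (hA : ∀ i j, 0 ≤ A i j) (hrow : ∀ v, ∑ j, A v j ≤ 1) (n : ℕ) :
    ∀ v, ∑ j, (A ^ (n+1)) v j ≤ ∑ j, (A ^ n) v j := by
  induction n with
  | zero =>
    intro v
    calc ∑ j, (A ^ 1) v j ≤ 1 := lyap_s_le_one A hA hrow 1 v
    _ = ∑ j, (A ^ 0) v j := by simp [Matrix.one_apply]
  | succ n ih =>
    intro v
    rw [lyap_s_succ, lyap_s_succ]
    exact Finset.sum_le_sum fun u _ => mul_le_mul_of_nonneg_left (ih u) (hA v u)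

lemma lyap_s_anti (hA : ∀ i j, 0 ≤ A i j) (hrow : ∀ v, ∑ j, A v j ≤ 1) (v : Fin N) :
    Antitone fun n => ∑ j, (A ^ n) v j :=
  antitone_nat_of_succ_le fun n => lyap_s_succ_le A hA hrow n v

end rowsum

section key
variable (P Λ : Matrix (Fin N) (Fin N) ℝ)

lemma lyap_entry (hΛdiag : Λ.IsDiag) (i j : Fin N) : (Λ * P) i j = Λ i i * P i j := by
  rw [Matrix.mul_apply]
  refine Finset.sum_eq_single i (fun b _ hb => ?_) (by simp)
  rw [hΛdiag (Ne.symm hb), zero_mul]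

lemma lyap_row (hProw : ∀ i, ∑ j, P i j = 1) (hΛdiag : Λ.IsDiag) (v : Fin N) :
    ∑ j, (Λ * P) v j = Λ v v := by
  simp_rw [lyap_entry P Λ hΛdiag, ← Finset.mul_sum, hProw, mul_one]

lemma lyap_key (hPnn : ∀ i j, 0 ≤ P i j) (hProw : ∀ i, ∑ j, P i j = 1)
    (hΛdiag : Λ.IsDiag) (hΛ : ∀ i, Λ i i ∈ Set.Icc (0 : ℝ) 1) :
    ∀ (k : ℕ) (v w : Fin N), 0 < (P ^ k) v w → Λ w w < 1 →
      ∑ j, ((Λ * P) ^ (k + 1)) v j < 1 := by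
  have hAnn : ∀ i j, 0 ≤ (Λ * P) i j := fun i j => by
    rw [lyap_entry P Λ hΛdiag]; exact mul_nonneg (hΛ i).1 (hPnn i j)
  have hrow : ∀ v, ∑ j, (Λ * P) v j ≤ 1 := fun v => by
    rw [lyap_row P Λ hProw hΛdiag]; exact (hΛ v).2
  intro k
  induction k with
  | zero =>
    intro v w hp hw
    have hvw : v = w := by
      by_contra h
      rw [pow_zero, Matrix.one_apply_ne h] at hp
      exact lt_irrefl _ hp
    rw [pow_one, lyap_row P Λ hProw hΛdiag, hvw]
    exact hw
  | succ k ih =>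
    intro v w hp hw
    -- find u with P v u > 0 and (P^k) u w > 0
    rw [pow_succ', Matrix.mul_apply] at hp
    have : ∃ u, 0 < P v u * (P ^ k) u w := by
      by_contra h
      push_neg at h
      have : ∑ u, P v u * (P ^ k) u w ≤ 0 := Finset.sum_nonpos fun u _ => h u
      linarith
    obtain ⟨u, hu⟩ := this
    have hPvu : 0 < P v u := by
      rcases lt_or_ge 0 (P v u) with h | h
      · exact h
      · exfalso; nlinarith [lyap_pow_nonneg P hPnn k u w, hPnn v u]
    have hPkuw : 0 < (P ^ k) u w := by
      rcases mul_pos_iff.mp hu with ⟨_, h2⟩ | ⟨h1, _⟩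
      · exact h2
      · exact absurd h1 (not_lt.mpr (hPnn v u))
    have hs : ∑ j, ((Λ * P) ^ (k + 1 + 1)) v j
        = ∑ u', (Λ * P) v u' * ∑ j, ((Λ * P) ^ (k + 1)) u' j := lyap_s_succ _ _ _
    rw [hs]
    have hone : (1 : ℝ) = ∑ u', P v u' := (hProw v).symm
    rw [hone]
    refine Finset.sum_lt_sum (fun u' _ => ?_) ⟨u, Finset.mem_univ u, ?_⟩
    · calc (Λ * P) v u' * ∑ j, ((Λ * P) ^ (k + 1)) u' j
          ≤ P v u' * ∑ j, ((Λ * P) ^ (k + 1)) u' j := by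
            refine mul_le_mul_of_nonneg_right ?_ (lyap_s_nonneg _ hAnn _ _)
            rw [lyap_entry P Λ hΛdiag]
            calc Λ v v * P v u' ≤ 1 * P v u' :=
              mul_le_mul_of_nonneg_right (hΛ v).2 (hPnn v u')
            _ = P v u' := one_mul _
      _ ≤ P v u' * 1 := mul_le_mul_of_nonneg_left (lyap_s_le_one _ hAnn hrow _ _) (hPnn v u')
      _ = P v u' := mul_one _
    · calc (Λ * P) v u * ∑ j, ((Λ * P) ^ (k + 1)) u j
          ≤ P v u * ∑ j, ((Λ * P) ^ (k + 1)) u j := by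
            refine mul_le_mul_of_nonneg_right ?_ (lyap_s_nonneg _ hAnn _ _)
            rw [lyap_entry P Λ hΛdiag]
            calc Λ v v * P v u ≤ 1 * P v u :=
              mul_le_mul_of_nonneg_right (hΛ v).2 (hPnn v u)
            _ = P v u := one_mul _
      _ < P v u := mul_lt_of_lt_one_right hPvu (ih u w hPkuw hw)
end key

lemma lyap_exists_m (P Λ : Matrix (Fin N) (Fin N) ℝ) (hN : 1 ≤ N)
    (hPnn : ∀ i j, 0 ≤ P i j) (hProw : ∀ i, ∑ j, P i j = 1)
    (hΛdiag : Λ.IsDiag) (hΛ : ∀ i, Λ i i ∈ Set.Icc (0 : ℝ) 1)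
    (hconn : ∀ v : Fin N, ∃ (w : Fin N) (k : ℕ), Λ w w < 1 ∧ 0 < (P ^ k) v w) :
    ∃ m : ℕ, 1 ≤ m ∧ ∀ v, ∑ j, ((Λ * P) ^ m) v j < 1 := by
  have hAnn : ∀ i j, 0 ≤ (Λ * P) i j := fun i j => by
    rw [lyap_entry P Λ hΛdiag]; exact mul_nonneg (hΛ i).1 (hPnn i j)
  have hrow : ∀ v, ∑ j, (Λ * P) v j ≤ 1 := fun v => by
    rw [lyap_row P Λ hProw hΛdiag]; exact (hΛ v).2
  choose w k hw hk using hconn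
  refine ⟨Finset.univ.sup (fun v => k v + 1), ?_, fun v => ?_⟩
  · have : Nonempty (Fin N) := ⟨⟨0, hN⟩⟩
    obtain ⟨v⟩ := this
    calc 1 ≤ k v + 1 := Nat.le_add_left 1 _
    _ ≤ _ := Finset.le_sup (f := fun v => k v + 1) (Finset.mem_univ v)
  · have h1 : ∑ j, ((Λ * P) ^ (k v + 1)) v j < 1 :=
      lyap_key P Λ hPnn hProw hΛdiag hΛ (k v) v (w v) (hk v) (hw v)
    have h2 := lyap_s_anti (Λ * P) hAnn hrow v (Finset.le_sup (f := fun v => k v + 1) (Finset.mem_univ v))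
    exact lt_of_le_of_lt h2 h1

lemma lyap_rowsum_coe (M : Matrix (Fin N) (Fin N) ℝ) (hM : ∀ i j, 0 ≤ M i j) (i : Fin N) :
    ((∑ j, ‖M i j‖₊ : NNReal) : ℝ) = ∑ j, M i j := by
  push_cast
  exact Finset.sum_congr rfl fun j _ => by
    rw [Real.norm_eq_abs, abs_of_nonneg (hM i j)]

lemma lyap_norm_le_one (M : Matrix (Fin N) (Fin N) ℝ) (hM : ∀ i j, 0 ≤ M i j)
    (h : ∀ v, ∑ j, M v j ≤ 1) : ‖M‖ ≤ 1 := by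
  rw [Matrix.linfty_opNorm_def]
  have : (Finset.univ.sup fun i : Fin N => ∑ j, ‖M i j‖₊) ≤ 1 := by
    refine Finset.sup_le fun i _ => ?_
    rw [← NNReal.coe_le_coe, lyap_rowsum_coe M hM i]
    simpa using h i
  exact_mod_cast this

lemma lyap_norm_lt_one (M : Matrix (Fin N) (Fin N) ℝ) (hM : ∀ i j, 0 ≤ M i j)
    (h : ∀ v, ∑ j, M v j < 1) : ‖M‖ < 1 := by
  rw [Matrix.linfty_opNorm_def]
  have : (Finset.univ.sup fun i : Fin N => ∑ j, ‖M i j‖₊) < 1 := by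
    refine Finset.sup_lt_iff (by norm_num) |>.mpr fun i _ => ?_
    rw [← NNReal.coe_lt_coe, lyap_rowsum_coe M hM i]
    simpa using h i
  exact_mod_cast this

lemma lyap_entry_le_norm (M : Matrix (Fin N) (Fin N) ℝ) (i j : Fin N) : ‖M i j‖ ≤ ‖M‖ := by
  rw [Matrix.linfty_opNorm_def]
  have h1 : ‖M i j‖₊ ≤ ∑ j', ‖M i j'‖₊ :=
    Finset.single_le_sum (f := fun j' => ‖M i j'‖₊) (fun _ _ => zero_le) (Finset.mem_univ j)
  have h2 : (∑ j', ‖M i j'‖₊) ≤ Finset.univ.sup fun i : Fin N => ∑ j', ‖M i j'‖₊ :=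
    Finset.le_sup (f := fun i => ∑ j' : Fin N, ‖M i j'‖₊) (Finset.mem_univ i)
  exact_mod_cast h1.trans h2

lemma lyap_transpose_norm_le (M : Matrix (Fin N) (Fin N) ℝ) : ‖Mᵀ‖ ≤ N * ‖M‖ := by
  rw [Matrix.linfty_opNorm_def (A := Mᵀ)]
  have : (Finset.univ.sup fun i : Fin N => ∑ j, ‖Mᵀ i j‖₊) ≤ ‖M‖₊ * N := by
    refine Finset.sup_le fun i _ => ?_
    calc ∑ j, ‖Mᵀ i j‖₊ ≤ ∑ _j : Fin N, ‖M‖₊ := Finset.sum_le_sum fun j _ => by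
          exact_mod_cast lyap_entry_le_norm M j i
    _ = ‖M‖₊ * N := by simp [mul_comm]
  calc ((Finset.univ.sup fun i : Fin N => ∑ j, ‖Mᵀ i j‖₊ : NNReal) : ℝ) ≤ ((‖M‖₊ * N : NNReal) : ℝ) := by
        exact_mod_cast this
  _ = N * ‖M‖ := by push_cast [coe_nnnorm]; ring

lemma lyap_summable_div (m : ℕ) (hm : 1 ≤ m) (ρ : ℝ) (h0 : 0 ≤ ρ) (h1 : ρ < 1) :
    Summable (fun n : ℕ => ρ ^ (n / m)) := by
  haveI : NeZero m := ⟨Nat.one_le_iff_ne_zero.mp hm⟩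
  rw [← (Nat.divModEquiv m).symm.summable_iff]
  have heq2 : ((fun n : ℕ => ρ ^ (n / m)) ∘ (Nat.divModEquiv m).symm)
      = fun p : ℕ × Fin m => ρ ^ p.1 := by
    funext p
    show ρ ^ ((p.1 * m + (p.2 : ℕ)) / m) = ρ ^ p.1
    congr 1
    rw [mul_comm, Nat.mul_add_div (Nat.pos_of_ne_zero (NeZero.ne m)),
      Nat.div_eq_of_lt p.2.2, add_zero]
  rw [heq2]
  refine (summable_prod_of_nonneg fun p => by positivity).mpr
    ⟨fun q => Summable.of_finite, ?_⟩
  have : (fun q : ℕ => ∑' _ : Fin m, ρ ^ q) = fun q : ℕ => (m : ℝ) * ρ ^ q := by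
    funext q
    rw [tsum_const]
    simp [nsmul_eq_mul]
  rw [this]
  exact (summable_geometric_of_lt_one h0 h1).mul_left _

lemma lyap_pow_norm_bound (hN : 1 ≤ N) (A : Matrix (Fin N) (Fin N) ℝ)
    (hA1 : ‖A‖ ≤ 1) (m : ℕ) (_hm : 1 ≤ m) (n : ℕ) :
    ‖A ^ n‖ ≤ ‖A ^ m‖ ^ (n / m) := by
  haveI : Nonempty (Fin N) := ⟨⟨0, hN⟩⟩
  conv_lhs => rw [← Nat.div_add_mod n m]
  rw [pow_add, pow_mul]
  calc ‖(A ^ m) ^ (n / m) * A ^ (n % m)‖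
      ≤ ‖(A ^ m) ^ (n / m)‖ * ‖A ^ (n % m)‖ := norm_mul_le _ _
  _ ≤ ‖A ^ m‖ ^ (n / m) * 1 := by
      refine mul_le_mul (norm_pow_le _ _) ?_ (norm_nonneg _) (by positivity)
      calc ‖A ^ (n % m)‖ ≤ ‖A‖ ^ (n % m) := norm_pow_le _ _
      _ ≤ 1 := pow_le_one₀ (norm_nonneg _) hA1
  _ = ‖A ^ m‖ ^ (n / m) := mul_one _

lemma lyap_entry_hasSum {N : ℕ} (f : ℕ → Matrix (Fin N) (Fin N) ℝ)
    (Q : Matrix (Fin N) (Fin N) ℝ) (hQ : HasSum f Q) (i j : Fin N) :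
    HasSum (fun k => f k i j) (Q i j) := by
  have hlip : ∀ M M' : Matrix (Fin N) (Fin N) ℝ,
      dist (M i j) (M' i j) ≤ 1 * dist M M' := by
    intro M M'
    rw [one_mul, dist_eq_norm, dist_eq_norm]
    have h : M i j - M' i j = (M - M') i j := rfl
    rw [h]
    exact lyap_entry_le_norm _ i j
  have hcont : Continuous (fun M : Matrix (Fin N) (Fin N) ℝ => M i j) :=
    (LipschitzWith.of_dist_le_mul (K := 1) (by exact_mod_cast hlip)).continuous
  exact hQ.map
    (⟨⟨fun M => M i j, rfl⟩, fun _ _ => rfl⟩ : Matrix (Fin N) (Fin N) ℝ →+ ℝ) hcont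

set_option maxHeartbeats 1000000 in
/-- Discrete-time Lyapunov equation for the opinion dynamics: under Assumption 1,
there exists a unique symmetric matrix `Q` with `(Λ P)ᵀ Q (Λ P) - Q = -I`; this `Q`
is positive definite and is given (entrywise) by the convergent series
`Q = ∑_{k=0}^∞ ((Λ P)ᵀ)^k (Λ P)^k`. -/
theorem stmt12 (N : ℕ) (hN : 1 ≤ N)
    (P Λ : Matrix (Fin N) (Fin N) ℝ)
    (hPnn : ∀ i j, 0 ≤ P i j)
    (hProw : ∀ i, ∑ j, P i j = 1)
    (hΛdiag : Λ.IsDiag)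
    (hΛ : ∀ i, Λ i i ∈ Set.Icc (0 : ℝ) 1)
    (hconn : ∀ v : Fin N, ∃ (w : Fin N) (k : ℕ), Λ w w < 1 ∧ 0 < (P ^ k) v w) :
    ∃ Q : Matrix (Fin N) (Fin N) ℝ,
      Q.IsSymm ∧
      (Λ * P)ᵀ * Q * (Λ * P) - Q = -(1 : Matrix (Fin N) (Fin N) ℝ) ∧
      Q.PosDef ∧
      (∀ i j, HasSum (fun k : ℕ => (((Λ * P)ᵀ) ^ k * (Λ * P) ^ k) i j) (Q i j)) ∧
      (∀ Q' : Matrix (Fin N) (Fin N) ℝ, Q'.IsSymm →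
        (Λ * P)ᵀ * Q' * (Λ * P) - Q' = -(1 : Matrix (Fin N) (Fin N) ℝ) → Q' = Q) := by
  haveI : Nonempty (Fin N) := ⟨⟨0, hN⟩⟩
  set A : Matrix (Fin N) (Fin N) ℝ := Λ * P with hAdef
  have hAnn : ∀ i j, 0 ≤ A i j := fun i j => by
    rw [hAdef, lyap_entry P Λ hΛdiag]; exact mul_nonneg (hΛ i).1 (hPnn i j)
  have hrow : ∀ v, ∑ j, A v j ≤ 1 := fun v => by
    rw [hAdef, lyap_row P Λ hProw hΛdiag]; exact (hΛ v).2
  have hA1 : ‖A‖ ≤ 1 := lyap_norm_le_one A hAnn hrow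
  obtain ⟨m, hm1, hmlt⟩ := lyap_exists_m P Λ hN hPnn hProw hΛdiag hΛ hconn
  have hAm : ‖A ^ m‖ < 1 := lyap_norm_lt_one _ (lyap_pow_nonneg A hAnn m) hmlt
  have hbound : ∀ n, ‖A ^ n‖ ≤ ‖A ^ m‖ ^ (n / m) :=
    lyap_pow_norm_bound hN A hA1 m hm1
  have hsum0 : Summable (fun n : ℕ => ‖A ^ m‖ ^ (n / m)) :=
    lyap_summable_div m hm1 _ (norm_nonneg _) hAm
  set f : ℕ → Matrix (Fin N) (Fin N) ℝ := fun k => (Aᵀ) ^ k * A ^ k with hfdef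
  have hAk1 : ∀ k : ℕ, ‖A ^ k‖ ≤ 1 := fun k =>
    le_trans (norm_pow_le _ _) (pow_le_one₀ (norm_nonneg _) hA1)
  have hfnorm : ∀ k, ‖f k‖ ≤ N * ‖A ^ m‖ ^ (k / m) := by
    intro k
    have h1 : ‖f k‖ ≤ ‖(Aᵀ) ^ k‖ * ‖A ^ k‖ := norm_mul_le _ _
    have h2 : ‖(Aᵀ) ^ k‖ ≤ N * ‖A ^ k‖ := by
      rw [← Matrix.transpose_pow]; exact lyap_transpose_norm_le _
    calc ‖f k‖ ≤ (N * ‖A ^ k‖) * ‖A ^ k‖ :=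
      h1.trans (mul_le_mul_of_nonneg_right h2 (norm_nonneg _))
    _ ≤ (N * ‖A ^ k‖) * 1 := by
        refine mul_le_mul_of_nonneg_left (hAk1 k) ?_
        positivity
    _ = N * ‖A ^ k‖ := mul_one _
    _ ≤ N * ‖A ^ m‖ ^ (k / m) := by
        refine mul_le_mul_of_nonneg_left (hbound k) (by positivity)
  have hfsummable : Summable f :=
    Summable.of_norm_bounded (hsum0.mul_left _) hfnorm
  obtain ⟨Q, hQ⟩ := hfsummable
  have hentry : ∀ i j, HasSum (fun k => f k i j) (Q i j) := fun i j =>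
    lyap_entry_hasSum f Q hQ i j
  have hsymm_entry : ∀ k i j, f k i j = f k j i := by
    intro k i j
    have ht : ∀ a b, (Aᵀ ^ k) a b = (A ^ k) b a := fun a b => by
      rw [← Matrix.transpose_pow]; rfl
    rw [hfdef]
    simp only [Matrix.mul_apply, ht]
    exact Finset.sum_congr rfl fun l _ => mul_comm _ _
  have hQsymm_entry : ∀ i j, Q i j = Q j i := by
    intro i j
    have h2 := hentry j i
    have heq : (fun k => f k j i) = fun k => f k i j := funext fun k => hsymm_entry k j i
    rw [heq] at h2
    exact (h2.unique (hentry i j)).symm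
  have hQsymm : Q.IsSymm := Matrix.IsSymm.ext fun i j => hQsymm_entry j i
  -- Lyapunov equation
  have hlyap : Aᵀ * Q * A - Q = -(1 : Matrix (Fin N) (Fin N) ℝ) := by
    have h1 : HasSum (fun k => Aᵀ * f k * A) (Aᵀ * Q * A) := (hQ.mul_left Aᵀ).mul_right A
    have h2 : ∀ k, Aᵀ * f k * A = f (k + 1) := by
      intro k
      show Aᵀ * (Aᵀ ^ k * A ^ k) * A = Aᵀ ^ (k + 1) * A ^ (k + 1)
      rw [pow_succ A k, pow_succ' (Aᵀ) k]
      noncomm_ring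
    have h3 : HasSum (fun k => f (k + 1)) (Aᵀ * Q * A) := by
      rw [← funext h2]; exact h1
    have h4 : HasSum (fun k => f (k + 1)) (Q - f 0) := by
      refine (hasSum_nat_add_iff 1).mpr ?_
      simpa using hQ
    have h5 : Aᵀ * Q * A = Q - f 0 := h3.unique h4
    have hf0 : f 0 = 1 := by rw [hfdef]; simp
    rw [h5, hf0]; abel
  -- quadratic form has sum
  have hquad : ∀ x : Fin N → ℝ, HasSum (fun k => x ⬝ᵥ (f k *ᵥ x)) (x ⬝ᵥ (Q *ᵥ x)) := by
    intro x
    have hexp : ∀ M : Matrix (Fin N) (Fin N) ℝ,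
        x ⬝ᵥ (M *ᵥ x) = ∑ i, ∑ j, x i * (M i j * x j) := by
      intro M
      simp [dotProduct, Matrix.mulVec, Finset.mul_sum]
    simp only [hexp]
    exact hasSum_sum fun i _ => hasSum_sum fun j _ =>
      ((hentry i j).mul_right (x j)).mul_left (x i)
  have hquad_eq : ∀ (k : ℕ) (x : Fin N → ℝ),
      x ⬝ᵥ (f k *ᵥ x) = (A ^ k *ᵥ x) ⬝ᵥ (A ^ k *ᵥ x) := by
    intro k x
    have h1 : f k *ᵥ x = (A ^ k)ᵀ *ᵥ (A ^ k *ᵥ x) := by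
      rw [hfdef]
      show (Aᵀ ^ k * A ^ k) *ᵥ x = _
      rw [← Matrix.transpose_pow, Matrix.mulVec_mulVec]
    rw [h1, Matrix.dotProduct_mulVec, Matrix.vecMul_transpose]
  have hposdef : Q.PosDef := by
    refine Matrix.PosDef.of_dotProduct_mulVec_pos ?_ ?_
    · show Qᴴ = Q
      ext i j
      simp [Matrix.conjTranspose_apply, hQsymm_entry j i]
    · intro x hx
      have hstar : (star x : Fin N → ℝ) = x := star_trivial x
      rw [hstar]
      have hnn : ∀ k : ℕ, k ≠ 0 → 0 ≤ x ⬝ᵥ (f k *ᵥ x) := by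
        intro k _
        rw [hquad_eq k x]
        exact Finset.sum_nonneg fun i _ => mul_self_nonneg _
      have h0 : x ⬝ᵥ (f 0 *ᵥ x) = x ⬝ᵥ x := by
        rw [hquad_eq 0 x]; simp
      have hle : x ⬝ᵥ (f 0 *ᵥ x) ≤ x ⬝ᵥ (Q *ᵥ x) := le_hasSum (hquad x) 0 hnn
      have hpos : 0 < x ⬝ᵥ x := by
        obtain ⟨i, hi⟩ := Function.ne_iff.mp hx
        refine Finset.sum_pos' (fun j _ => mul_self_nonneg _) ⟨i, Finset.mem_univ i, ?_⟩
        exact mul_self_pos.mpr hi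
      calc (0 : ℝ) < x ⬝ᵥ x := hpos
      _ = x ⬝ᵥ (f 0 *ᵥ x) := h0.symm
      _ ≤ x ⬝ᵥ (Q *ᵥ x) := hle
  -- uniqueness
  have huniq : ∀ Q' : Matrix (Fin N) (Fin N) ℝ,
      Aᵀ * Q' * A - Q' = -(1 : Matrix (Fin N) (Fin N) ℝ) → Q' = Q := by
    intro Q' hQ'
    have hrec : Q' = 1 + Aᵀ * Q' * A := by
      have := sub_eq_iff_eq_add.mp hQ'
      rw [this]; abel
    have hn : ∀ n : ℕ, Q' = (∑ k ∈ Finset.range n, f k) + (Aᵀ) ^ n * Q' * A ^ n := by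
      intro n
      induction n with
      | zero => simp
      | succ n ih =>
        have hstep : (Aᵀ) ^ n * (1 + Aᵀ * Q' * A) * A ^ n
            = (Aᵀ) ^ n * A ^ n + (Aᵀ) ^ (n + 1) * Q' * A ^ (n + 1) := by
          rw [pow_succ (Aᵀ) n, pow_succ' A n, mul_add, mul_one, add_mul]
          simp only [mul_assoc]
        have hfn : f n = (Aᵀ) ^ n * A ^ n := rfl
        calc Q' = (∑ k ∈ Finset.range n, f k) + (Aᵀ) ^ n * Q' * A ^ n := ih
        _ = (∑ k ∈ Finset.range n, f k) + (Aᵀ) ^ n * (1 + Aᵀ * Q' * A) * A ^ n := by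
            rw [← hrec]
        _ = (∑ k ∈ Finset.range (n + 1), f k) + (Aᵀ) ^ (n + 1) * Q' * A ^ (n + 1) := by
            rw [hstep, Finset.sum_range_succ, hfn, add_assoc]
    have hS : Filter.Tendsto (fun n => ∑ k ∈ Finset.range n, f k)
        Filter.atTop (nhds Q) := hQ.tendsto_sum_nat
    have hRnorm : ∀ n : ℕ, ‖(Aᵀ) ^ n * Q' * A ^ n‖ ≤ (N * ‖Q'‖) * ‖A ^ m‖ ^ (n / m) := by
      intro n
      have h1 : ‖(Aᵀ) ^ n * Q' * A ^ n‖ ≤ ‖(Aᵀ) ^ n‖ * ‖Q'‖ * ‖A ^ n‖ :=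
        le_trans (norm_mul_le _ _)
          (mul_le_mul_of_nonneg_right (norm_mul_le _ _) (norm_nonneg _))
      have h2 : ‖(Aᵀ) ^ n‖ ≤ N * ‖A ^ n‖ := by
        rw [← Matrix.transpose_pow]; exact lyap_transpose_norm_le _
      calc ‖(Aᵀ) ^ n * Q' * A ^ n‖ ≤ ‖(Aᵀ) ^ n‖ * ‖Q'‖ * ‖A ^ n‖ := h1
      _ ≤ (N * ‖A ^ n‖) * ‖Q'‖ * ‖A ^ n‖ := by
          have := mul_le_mul_of_nonneg_right h2 (norm_nonneg Q')
          exact mul_le_mul_of_nonneg_right this (norm_nonneg _)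
      _ = (N * ‖Q'‖ * ‖A ^ n‖) * ‖A ^ n‖ := by ring
      _ ≤ (N * ‖Q'‖ * 1) * ‖A ^ m‖ ^ (n / m) := by
          refine mul_le_mul ?_ (hbound n) (norm_nonneg _) (by positivity)
          exact mul_le_mul_of_nonneg_left (hAk1 n) (by positivity)
      _ = (N * ‖Q'‖) * ‖A ^ m‖ ^ (n / m) := by ring
    have hg0 : Filter.Tendsto (fun n : ℕ => (N * ‖Q'‖) * ‖A ^ m‖ ^ (n / m))
        Filter.atTop (nhds 0) := by
      have := hsum0.tendsto_atTop_zero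
      simpa using this.const_mul (N * ‖Q'‖)
    have hR0 : Filter.Tendsto (fun n : ℕ => (Aᵀ) ^ n * Q' * A ^ n)
        Filter.atTop (nhds 0) := squeeze_zero_norm hRnorm hg0
    have hconst : Filter.Tendsto
        (fun n : ℕ => (∑ k ∈ Finset.range n, f k) + (Aᵀ) ^ n * Q' * A ^ n)
        Filter.atTop (nhds (Q + 0)) := hS.add hR0
    have heq : (fun n : ℕ => (∑ k ∈ Finset.range n, f k) + (Aᵀ) ^ n * Q' * A ^ n)
        = fun _ => Q' := funext fun n => (hn n).symm
    rw [heq] at hconst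
    have := tendsto_nhds_unique hconst tendsto_const_nhds
    rw [← this, add_zero]
  exact ⟨Q, hQsymm, hlyap, hposdef, hentry, fun Q' _ hQ'eq => huniq Q' hQ'eq⟩
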